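/- The series Σ_{d square-free} σ_d, taken over all square-free positive integers d, converges absolutely and equals 6/π². -/

import Mathlib

/-- `σ_d = (1/d²)·∏_{p prime, p ∤ d} (1 − 2/p²)`. -/
noncomputable def sigmaSF (d : ℕ) : ℝ :=
  (1 / (d : ℝ) ^ 2) * ∏' p : {p : ℕ // p.Prime ∧ ¬ p ∣ d}, (1 - 2 / ((p : ℕ) : ℝ) ^ 2)

open Real

noncomputable section SigmaSFAux

namespace SigmaSFAux

/-- the removed local factor -/
def qr (p : ℕ) : ℝ := 2 / (p : ℝ) ^ 2

def rr (p : ℕ) : ℝ := (1 / (p : ℝ) ^ 2) / (1 - qr p)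

def Q (p : Nat.Primes) : ℝ := 1 - qr (p : ℕ)

def g (n : ℕ) : ℝ := if Squarefree n then ∏ p ∈ n.primeFactors, rr p else 0

lemma four_le_sq {p : ℕ} (hp : p.Prime) : (4 : ℝ) ≤ (p : ℝ) ^ 2 := by
  have h : (2 : ℝ) ≤ (p : ℝ) := by exact_mod_cast hp.two_le
  nlinarith

lemma one_sub_qr_half {p : ℕ} (hp : p.Prime) : (1 / 2 : ℝ) ≤ 1 - qr p := by
  have h4 := four_le_sq hp
  have hpos : (0 : ℝ) < (p : ℝ) ^ 2 := by linarith
  have h : qr p ≤ 1 / 2 := by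
    rw [qr, div_le_iff₀ hpos]; linarith
  linarith

lemma one_sub_qr_pos {p : ℕ} (hp : p.Prime) : (0 : ℝ) < 1 - qr p :=
  lt_of_lt_of_le (by norm_num) (one_sub_qr_half hp)

lemma rr_nonneg {p : ℕ} (hp : p.Prime) : 0 ≤ rr p :=
  div_nonneg (by positivity) (le_of_lt (one_sub_qr_pos hp))

lemma norm_log_le {p : ℕ} (hp : p.Prime) :
    ‖Real.log (1 - qr p)‖ ≤ 4 / (p : ℝ) ^ 2 := by
  have h0 := one_sub_qr_pos hp
  have hh := one_sub_qr_half hp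
  have hq0 : 0 ≤ qr p := by unfold qr; positivity
  have habs : ‖Real.log (1 - qr p)‖ = - Real.log (1 - qr p) := by
    rw [Real.norm_eq_abs, abs_of_nonpos (Real.log_nonpos (by linarith) (by linarith))]
  rw [habs, ← Real.log_inv]
  have hlog := Real.log_le_sub_one_of_pos (x := (1 - qr p)⁻¹) (inv_pos.mpr h0)
  have hinv : (1 - qr p)⁻¹ ≤ 2 := by
    have := inv_anti₀ (by norm_num : (0:ℝ) < 1/2) hh
    simpa using this
  have hid : (1 - qr p) * (1 - qr p)⁻¹ = 1 := mul_inv_cancel₀ h0.ne'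
  have hq : qr p = 2 / (p : ℝ) ^ 2 := rfl
  have h4 : (4:ℝ) ≤ (p : ℝ)^2 := four_le_sq hp
  have hppos : (0:ℝ) < (p : ℝ)^2 := by linarith
  have h2q : 2 * qr p = 4 / (p : ℝ)^2 := by rw [hq]; ring
  nlinarith [hlog, hinv, hid]

lemma summable_aux : Summable (fun p : Nat.Primes => (4 : ℝ) / ((p : ℕ) : ℝ) ^ 2) := by
  have h : Summable (fun n : ℕ => (4 : ℝ) / (n : ℝ) ^ 2) := by
    have h2 := summable_one_div_nat_pow.mpr (one_lt_two (α := ℕ))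
    have := h2.mul_left (4 : ℝ)
    refine this.congr fun n => ?_
    rw [← mul_div_assoc, mul_one]
  exact h.comp_injective (fun p q hpq => Subtype.ext hpq)

lemma summable_log : Summable (fun p : Nat.Primes => Real.log (Q p)) :=
  Summable.of_norm_bounded summable_aux (fun p => norm_log_le p.2)

def S : ℝ := ∑' p : Nat.Primes, Real.log (Q p)

def C : ℝ := Real.exp S

lemma hasProd_C : HasProd Q C := by
  have h := summable_log.hasSum.rexp
  have he : rexp ∘ (fun p : Nat.Primes => Real.log (Q p)) = Q :=
    funext fun p => Real.exp_log (one_sub_qr_pos p.2)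
  rwa [he] at h

lemma C_pos : 0 < C := Real.exp_pos _

lemma hasProd_set (s : Set Nat.Primes) :
    HasProd (fun p : s => Q p) (Real.exp (∑' p : s, Real.log (Q p))) := by
  have hs : Summable (fun p : s => Real.log (Q p)) := summable_log.subtype s
  have h := hs.hasSum.rexp
  have he : rexp ∘ (fun p : s => Real.log (Q p)) = fun p : s => Q p :=
    funext fun p => Real.exp_log (one_sub_qr_pos (p : Nat.Primes).2)
  rwa [he] at h

lemma tprod_set_pos (s : Set Nat.Primes) : 0 < ∏' p : s, Q p := by
  rw [(hasProd_set s).tprod_eq]; exact Real.exp_pos _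

lemma tprod_set_le_one (s : Set Nat.Primes) : (∏' p : s, Q p) ≤ 1 := by
  rw [(hasProd_set s).tprod_eq]
  calc Real.exp (∑' p : s, Real.log (Q p)) ≤ Real.exp 0 := by
        apply Real.exp_le_exp.mpr
        apply tsum_nonpos
        intro p
        have hq0 : 0 ≤ qr ((p : Nat.Primes) : ℕ) := by unfold qr; positivity
        exact Real.log_nonpos (le_of_lt (one_sub_qr_pos (p : Nat.Primes).2)) (by
          unfold Q; linarith)
    _ = 1 := Real.exp_zero

lemma key {n : ℕ} (hn : Squarefree n) :
    sigmaSF n = C * g n ∧ 0 ≤ sigmaSF n ∧ g n ≤ C⁻¹ * (1 / (n : ℝ) ^ 2) := by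
  have hn0 : n ≠ 0 := hn.ne_zero
  set s : Set Nat.Primes := {p : Nat.Primes | (p : ℕ) ∣ n} with hs
  let e1 : {x : ℕ // x ∈ n.primeFactors} ≃ s :=
    { toFun := fun x => ⟨⟨x.1, Nat.prime_of_mem_primeFactors x.2⟩,
        Nat.dvd_of_mem_primeFactors x.2⟩
      invFun := fun p => ⟨((p : Nat.Primes) : ℕ),
        Nat.mem_primeFactors.mpr ⟨(p : Nat.Primes).2, p.2, hn0⟩⟩
      left_inv := fun _ => rfl
      right_inv := fun _ => rfl }
  let e2 : {p : ℕ // p.Prime ∧ ¬ p ∣ n} ≃ ↥sᶜ :=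
    { toFun := fun p => ⟨⟨p.1, p.2.1⟩, p.2.2⟩
      invFun := fun p => ⟨((p : Nat.Primes) : ℕ), (p : Nat.Primes).2, p.2⟩
      left_inv := fun _ => rfl
      right_inv := fun _ => rfl }
  have claim1 : (∏' p : s, Q p) = ∏ p ∈ n.primeFactors, (1 - qr p) := by
    rw [← Equiv.tprod_eq e1 (fun p : s => Q p),
      ← Finset.tprod_subtype n.primeFactors (fun p => 1 - qr p)]
    exact tprod_congr fun x => rfl
  have claim3 : (∏' p : {p : ℕ // p.Prime ∧ ¬ p ∣ n}, (1 - 2 / ((p : ℕ) : ℝ) ^ 2))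
      = ∏' p : ↥sᶜ, Q p := by
    rw [← Equiv.tprod_eq e2 (fun p : ↥sᶜ => Q p)]
    exact tprod_congr fun x => rfl
  set Fn := ∏ p ∈ n.primeFactors, (1 - qr p) with hFn
  have hFnpos : 0 < Fn :=
    Finset.prod_pos fun p hp => one_sub_qr_pos (Nat.prime_of_mem_primeFactors hp)
  set Tc := ∏' p : ↥sᶜ, Q p with hTc
  have hTcpos : 0 < Tc := tprod_set_pos _
  have hTcle : Tc ≤ 1 := tprod_set_le_one _
  have hsplit : Fn * Tc = C := by
    rw [← claim1]
    exact (Multipliable.tprod_mul_tprod_compl (f := Q) (hasProd_set s).multipliable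
      (hasProd_set sᶜ).multipliable).trans hasProd_C.tprod_eq
  have hprodsq : (∏ p ∈ n.primeFactors, ((p : ℝ)) ^ 2) = (n : ℝ) ^ 2 := by
    rw [Finset.prod_pow, ← Nat.cast_prod, Nat.prod_primeFactors_of_squarefree hn]
  have hgn : g n = (1 / (n : ℝ) ^ 2) / Fn := by
    rw [g, if_pos hn]
    unfold Fn
    simp only [rr]
    rw [Finset.prod_div_distrib, Finset.prod_div_distrib, Finset.prod_const_one, hprodsq]
  have hsigma : sigmaSF n = (1 / (n : ℝ) ^ 2) * Tc := by
    rw [sigmaSF, claim3]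
  have hn2pos : (0 : ℝ) < (n : ℝ) ^ 2 := by
    have : (0 : ℝ) < (n : ℝ) := by exact_mod_cast Nat.pos_of_ne_zero hn0
    positivity
  have hmain : sigmaSF n = C * g n := by
    rw [hsigma, hgn, ← hsplit]
    field_simp
  refine ⟨hmain, ?_, ?_⟩
  · rw [hsigma]
    exact mul_nonneg (by positivity) hTcpos.le
  · have h1 : C * g n ≤ 1 / (n : ℝ) ^ 2 := by
      rw [← hmain, hsigma]
      have := mul_le_of_le_one_right (le_of_lt (by positivity : (0:ℝ) < 1 / (n : ℝ) ^ 2)) hTcle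
      exact this
    calc g n = C⁻¹ * (C * g n) := by rw [inv_mul_cancel_left₀ C_pos.ne']
      _ ≤ C⁻¹ * (1 / (n : ℝ) ^ 2) :=
          mul_le_mul_of_nonneg_left h1 (inv_nonneg.mpr C_pos.le)

lemma g_nonneg (n : ℕ) : 0 ≤ g n := by
  rw [g]
  split
  · exact Finset.prod_nonneg fun p hp => rr_nonneg (Nat.prime_of_mem_primeFactors hp)
  · exact le_refl 0

lemma g_bound (n : ℕ) : g n ≤ C⁻¹ * (1 / (n : ℝ) ^ 2) := by
  by_cases hn : Squarefree n
  · exact (key hn).2.2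
  · rw [g, if_neg hn]
    exact mul_nonneg (inv_nonneg.mpr C_pos.le) (by positivity)

lemma summable_g : Summable g := by
  refine Summable.of_nonneg_of_le g_nonneg g_bound ?_
  exact (summable_one_div_nat_pow.mpr (one_lt_two (α := ℕ))).mul_left _

lemma g_one : g 1 = 1 := by
  rw [g, if_pos squarefree_one]
  simp

lemma g_zero : g 0 = 0 := by
  rw [g, if_neg not_squarefree_zero]

lemma g_mul {m k : ℕ} (h : Nat.Coprime m k) : g (m * k) = g m * g k := by
  by_cases hmk : Squarefree (m * k)
  · have hm := hmk.squarefree_of_dvd (dvd_mul_right m k)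
    have hk := hmk.squarefree_of_dvd (dvd_mul_left k m)
    rw [g, g, g, if_pos hmk, if_pos hm, if_pos hk,
      Nat.primeFactors_mul hm.ne_zero hk.ne_zero,
      Finset.prod_union h.disjoint_primeFactors]
  · rw [g, if_neg hmk]
    by_cases hm : Squarefree m
    · by_cases hk : Squarefree k
      · exact absurd ((Nat.squarefree_mul h).mpr ⟨hm, hk⟩) hmk
      · rw [g, g, if_neg hk, mul_zero]
    · rw [g, if_neg hm, zero_mul]

lemma local_sum (p : Nat.Primes) : ∑' e : ℕ, g ((p : ℕ) ^ e) = 1 + rr (p : ℕ) := by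
  have hp := p.2
  rw [tsum_eq_sum (s := ({0, 1} : Finset ℕ)) ?_]
  · rw [Finset.sum_pair (by norm_num : (0 : ℕ) ≠ 1), pow_zero, pow_one, g_one]
    rw [g, if_pos hp.prime.squarefree, hp.primeFactors, Finset.prod_singleton]
  · intro e he
    have h2 : 2 ≤ e := by
      simp only [Finset.mem_insert, Finset.mem_singleton] at he
      omega
    rw [g, if_neg]
    intro hsq
    refine hp.prime.not_unit (hsq (p : ℕ) ?_)
    have hd : (p : ℕ) ^ 2 ∣ (p : ℕ) ^ e := pow_dvd_pow _ h2
    rwa [pow_two] at hd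

lemma euler_g : HasProd (fun p : Nat.Primes => 1 + rr (p : ℕ)) (∑' n : ℕ, g n) := by
  have hnorm : Summable (fun n : ℕ => ‖g n‖) := by
    refine summable_g.congr fun n => ?_
    rw [Real.norm_eq_abs, abs_of_nonneg (g_nonneg n)]
  have h := EulerProduct.eulerProduct_hasProd g_one (fun {m k} h => g_mul h) hnorm g_zero
  have he : (fun p : Nat.Primes => ∑' e : ℕ, g ((p : ℕ) ^ e))
      = fun p : Nat.Primes => 1 + rr (p : ℕ) := funext local_sum
  rwa [he] at h

def zeta2 : ℕ →*₀ ℝ where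
  toFun n := (((n : ℝ)) ^ 2)⁻¹
  map_zero' := by norm_num
  map_one' := by norm_num
  map_mul' m n := by push_cast; rw [mul_pow, mul_inv]

lemma hasProd_zeta : HasProd (fun p : Nat.Primes => 1 - (((p : ℕ) : ℝ) ^ 2)⁻¹)
    (6 / Real.pi ^ 2) := by
  have hsum : Summable (fun n : ℕ => ‖zeta2 n‖) := by
    refine (summable_one_div_nat_pow.mpr (one_lt_two (α := ℕ))).congr fun n => ?_
    simp [zeta2, Real.norm_eq_abs, abs_of_nonneg, one_div]
  have h := EulerProduct.eulerProduct_completely_multiplicative_hasProd hsum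
  have hts : ∑' n : ℕ, zeta2 n = Real.pi ^ 2 / 6 := by
    have hz := hasSum_zeta_two
    have : (fun n : ℕ => zeta2 n) = fun n : ℕ => 1 / (n : ℝ) ^ 2 := by
      funext n; simp [zeta2, one_div]
    rw [this]
    exact hz.tsum_eq
  rw [hts] at h
  have hπ : (Real.pi ^ 2 / 6 : ℝ) ≠ 0 := by positivity
  have h2 : Filter.Tendsto
      (fun t : Finset Nat.Primes => (∏ p ∈ t, (1 - zeta2 (p : ℕ))⁻¹)⁻¹)
      Filter.atTop (nhds (Real.pi ^ 2 / 6)⁻¹) := Filter.Tendsto.inv₀ (h : Filter.Tendsto _ _ _) hπ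
  have h3 : ∀ t : Finset Nat.Primes,
      (∏ p ∈ t, (1 - zeta2 (p : ℕ))⁻¹)⁻¹ = ∏ p ∈ t, (1 - (((p : ℕ) : ℝ) ^ 2)⁻¹) := by
    intro t
    rw [← Finset.prod_inv_distrib]
    refine Finset.prod_congr rfl fun p _ => ?_
    rw [inv_inv]
    rfl
  have h4 : (Real.pi ^ 2 / 6 : ℝ)⁻¹ = 6 / Real.pi ^ 2 := inv_div _ _
  rw [h4] at h2
  have h5 : HasProd (fun p : Nat.Primes => 1 - (((p : ℕ) : ℝ) ^ 2)⁻¹) (6 / Real.pi ^ 2) := by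
    unfold HasProd
    simpa only [h3, SummationFilter.unconditional_filter] using h2
  exact h5

lemma key_product : C * (∑' n : ℕ, g n) = 6 / Real.pi ^ 2 := by
  have h := hasProd_C.mul euler_g
  have heq : (fun p : Nat.Primes => Q p * (1 + rr (p : ℕ)))
      = fun p : Nat.Primes => 1 - (((p : ℕ) : ℝ) ^ 2)⁻¹ := by
    funext p
    have h4 := four_le_sq p.2
    have hne : (1 - qr (p : ℕ)) ≠ 0 := (one_sub_qr_pos p.2).ne'
    have hp0 : (((p : ℕ) : ℝ)) ^ 2 ≠ 0 := by nlinarith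
    unfold Q rr qr at *
    have hne2 : (-2 + ((p : ℕ) : ℝ) ^ 2) ≠ 0 := by nlinarith
    have hinv : (-2 + ((p : ℕ) : ℝ) ^ 2) * (-2 + ((p : ℕ) : ℝ) ^ 2)⁻¹ = 1 :=
      mul_inv_cancel₀ hne2
    field_simp
    ring
  rw [heq] at h
  exact h.unique hasProd_zeta

end SigmaSFAux

end SigmaSFAux

/-- The series `Σ_{d square-free} σ_d` converges absolutely and equals `6/π²`. -/
theorem hasSum_sigmaSF_total :
    Summable (fun d : {d : ℕ // Squarefree d} => |sigmaSF d|)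
    ∧ HasSum (fun d : {d : ℕ // Squarefree d} => sigmaSF d) (6 / Real.pi ^ 2) := by
  classical
  have hsum0 : HasSum (fun n : ℕ => SigmaSFAux.C * SigmaSFAux.g n) (6 / Real.pi ^ 2) := by
    rw [← SigmaSFAux.key_product]
    exact SigmaSFAux.summable_g.hasSum.mul_left SigmaSFAux.C
  have hsupp : Function.support (fun n : ℕ => SigmaSFAux.C * SigmaSFAux.g n) ⊆ {d : ℕ | Squarefree d} := by
    intro n hn
    by_contra h
    have hns : ¬ Squarefree n := h
    exact hn (by simp [SigmaSFAux.g, hns])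
  have h2 : HasSum ((fun n : ℕ => SigmaSFAux.C * SigmaSFAux.g n) ∘ (fun d : {d : ℕ // Squarefree d} => (d : ℕ)))
      (6 / Real.pi ^ 2) := (hasSum_subtype_iff_of_support_subset hsupp).mpr hsum0
  have h3 : HasSum (fun d : {d : ℕ // Squarefree d} => sigmaSF d) (6 / Real.pi ^ 2) := by
    have he : (fun d : {d : ℕ // Squarefree d} => sigmaSF d)
        = (fun n : ℕ => SigmaSFAux.C * SigmaSFAux.g n) ∘ (fun d : {d : ℕ // Squarefree d} => (d : ℕ)) :=
      funext fun d => (SigmaSFAux.key d.2).1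
    rw [he]
    exact h2
  refine ⟨?_, h3⟩
  have he : (fun d : {d : ℕ // Squarefree d} => |sigmaSF d|)
      = fun d : {d : ℕ // Squarefree d} => sigmaSF d :=
    funext fun d => abs_of_nonneg (SigmaSFAux.key d.2).2.1
  rw [he]
  exact h3.summable
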